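/- Let A be a complex M×N matrix and B a complex N×K matrix with AB ≠ 0. Then a pair (A₀, B₀) with A₀B₀ = AB minimizes ‖A'‖·‖B'‖ over all pairs (A', B') with A'B' = AB if and only if A₀ᴴA₀/‖A₀‖² = B₀B₀ᴴ/‖B₀‖². -/

import Mathlib

open Matrix

/-- The Frobenius norm of a complex matrix: the ℓ² norm of its entries. -/
noncomputable def frob {m n : ℕ} (A : Matrix (Fin m) (Fin n) ℂ) : ℝ :=
  Real.sqrt (∑ i, ∑ j, ‖A i j‖ ^ 2)

set_option maxHeartbeats 1000000

lemma frob_nonneg {m n : ℕ} (A : Matrix (Fin m) (Fin n) ℂ) : 0 ≤ frob A := Real.sqrt_nonneg _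

lemma frob_sq {m n : ℕ} (A : Matrix (Fin m) (Fin n) ℂ) :
    frob A ^ 2 = ∑ i, ∑ j, ‖A i j‖ ^ 2 := Real.sq_sqrt (by positivity)

lemma frob_eq_zero_iff {m n : ℕ} {A : Matrix (Fin m) (Fin n) ℂ} : frob A = 0 ↔ A = 0 := by
  constructor
  · intro h
    have h2 : ∑ i, ∑ j, ‖A i j‖ ^ 2 = 0 := by rw [← frob_sq A, h]; norm_num
    ext i j
    have h1 : ∀ i ∈ (Finset.univ : Finset (Fin m)), (0:ℝ) ≤ ∑ j, ‖A i j‖ ^ 2 :=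
      fun i _ => Finset.sum_nonneg fun j _ => sq_nonneg _
    have hrow := (Finset.sum_eq_zero_iff_of_nonneg h1).mp h2 i (Finset.mem_univ i)
    have h3 : ∀ j ∈ (Finset.univ : Finset (Fin n)), (0:ℝ) ≤ ‖A i j‖ ^ 2 :=
      fun j _ => sq_nonneg _
    have hij := (Finset.sum_eq_zero_iff_of_nonneg h3).mp hrow j (Finset.mem_univ j)
    have : ‖A i j‖ = 0 := by nlinarith [norm_nonneg (A i j)]
    simpa using this
  · rintro rfl; simp [frob]

lemma frob_pos {m n : ℕ} {A : Matrix (Fin m) (Fin n) ℂ} (h : A ≠ 0) : 0 < frob A :=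
  lt_of_le_of_ne (frob_nonneg A) (fun h' => h (frob_eq_zero_iff.mp h'.symm))

lemma trace_conjTranspose_mul {m n : ℕ} (A : Matrix (Fin m) (Fin n) ℂ) :
    trace (Aᴴ * A) = ((frob A ^ 2 : ℝ) : ℂ) := by
  rw [frob_sq]
  push_cast
  rw [trace]
  unfold Matrix.diag
  simp only [Matrix.mul_apply, conjTranspose_apply]
  rw [Finset.sum_comm]
  congr 1; ext i; congr 1; ext j
  rw [Complex.star_def, ← Complex.normSq_eq_conj_mul_self]
  rw [Complex.normSq_eq_norm_sq]
  push_cast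
  rfl

lemma trace_mul_conjTranspose {m n : ℕ} (A : Matrix (Fin m) (Fin n) ℂ) :
    trace (A * Aᴴ) = ((frob A ^ 2 : ℝ) : ℂ) := by
  rw [trace_mul_comm, trace_conjTranspose_mul]

lemma re_trace_mul_le {m n : ℕ} (A : Matrix (Fin m) (Fin n) ℂ) (W : Matrix (Fin n) (Fin m) ℂ) :
    (trace (A * W)).re ≤ frob A * frob W := by
  have h1 : (trace (A * W)).re ≤ ‖trace (A * W)‖ := Complex.re_le_norm _
  refine h1.trans ?_
  have h2 : ‖trace (A * W)‖ ≤ ∑ i, ∑ j, ‖A i j‖ * ‖W j i‖ := by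
    rw [trace]
    unfold Matrix.diag
    simp only [Matrix.mul_apply]
    refine (norm_sum_le _ _).trans ?_
    refine Finset.sum_le_sum fun i _ => ?_
    refine (norm_sum_le _ _).trans ?_
    exact Finset.sum_le_sum fun j _ => norm_mul_le _ _
  refine h2.trans ?_
  -- Cauchy-Schwarz over the product finset
  have key := Finset.sum_mul_sq_le_sq_mul_sq (Finset.univ : Finset (Fin m × Fin n))
    (fun p => ‖A p.1 p.2‖) (fun p => ‖W p.2 p.1‖)
  have e1 : ∑ i, ∑ j, ‖A i j‖ * ‖W j i‖
      = ∑ p : Fin m × Fin n, ‖A p.1 p.2‖ * ‖W p.2 p.1‖ := by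
    rw [← Finset.sum_product']
    rfl
  have e2 : ∑ p : Fin m × Fin n, ‖A p.1 p.2‖ ^ 2 = ∑ i, ∑ j, ‖A i j‖ ^ 2 := by
    rw [← Finset.sum_product']
    rfl
  have e3 : ∑ p : Fin m × Fin n, ‖W p.2 p.1‖ ^ 2 = ∑ j, ∑ i, ‖W j i‖ ^ 2 := by
    rw [← Finset.sum_product']
    exact Fintype.sum_equiv (Equiv.prodComm _ _) _ _ (fun p => rfl)
  rw [e1]
  have hf : (0:ℝ) ≤ frob A * frob W := mul_nonneg (frob_nonneg _) (frob_nonneg _)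
  have hsum : (0:ℝ) ≤ ∑ p : Fin m × Fin n, ‖A p.1 p.2‖ * ‖W p.2 p.1‖ :=
    Finset.sum_nonneg fun p _ => mul_nonneg (norm_nonneg _) (norm_nonneg _)
  nlinarith [frob_sq A, frob_sq W, key, e2, e3, sq_nonneg (frob A * frob W)]

open scoped ComplexOrder in
lemma trace_re_nonneg_of_posSemidef {k : ℕ} {X : Matrix (Fin k) (Fin k) ℂ}
    (hX : X.PosSemidef) : 0 ≤ (trace X).re := by
  obtain ⟨B, rfl⟩ : ∃ B : Matrix (Fin k) (Fin k) ℂ, X = Bᴴ * B := by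
    open scoped MatrixOrder in exact CStarAlgebra.nonneg_iff_eq_star_mul_self.mp hX.nonneg
  rw [trace_conjTranspose_mul]
  simpa [← Complex.ofReal_pow] using sq_nonneg (frob B)

open scoped ComplexOrder in
lemma trace_mul_re_nonneg {k : ℕ} {X Y : Matrix (Fin k) (Fin k) ℂ}
    (hX : X.PosSemidef) (hY : Y.PosSemidef) : 0 ≤ (trace (X * Y)).re := by
  obtain ⟨B, rfl⟩ : ∃ B : Matrix (Fin k) (Fin k) ℂ, X = Bᴴ * B := by
    open scoped MatrixOrder in exact CStarAlgebra.nonneg_iff_eq_star_mul_self.mp hX.nonneg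
  have h1 : trace (Bᴴ * B * Y) = trace (B * Y * Bᴴ) := by
    rw [Matrix.mul_assoc, trace_mul_comm, Matrix.mul_assoc]
  rw [h1]
  exact trace_re_nonneg_of_posSemidef (hY.mul_mul_conjTranspose_same B)

lemma star_dot_self_eq {k : ℕ} (v : Fin k → ℂ) :
    star v ⬝ᵥ v = ((∑ i, ‖v i‖ ^ 2 : ℝ) : ℂ) := by
  push_cast
  simp only [dotProduct, Pi.star_apply]
  congr 1; ext i
  rw [Complex.star_def, ← Complex.normSq_eq_conj_mul_self, Complex.normSq_eq_norm_sq]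
  push_cast
  rfl

lemma trace_mul_vecMulVec {k : ℕ} (X : Matrix (Fin k) (Fin k) ℂ) (u : Fin k → ℂ) :
    trace (X * vecMulVec u (star u)) = star u ⬝ᵥ (X *ᵥ u) := by
  simp only [trace, Matrix.diag, Matrix.mul_apply, vecMulVec_apply, dotProduct, mulVec,
    Pi.star_apply]
  refine Finset.sum_congr rfl fun i _ => ?_
  rw [Finset.mul_sum]
  refine Finset.sum_congr rfl fun j _ => ?_
  ring

lemma eq_zero_of_forall_dot {k : ℕ} (Mx : Matrix (Fin k) (Fin k) ℂ)
    (h : ∀ u : Fin k → ℂ, star u ⬝ᵥ (Mx *ᵥ u) = 0) : Mx = 0 := by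
  have key : ∀ (w u : Fin k → ℂ), star w ⬝ᵥ u = star (star u ⬝ᵥ w) := by
    intro w u
    simp only [dotProduct, Pi.star_apply, star_sum, star_mul', star_star]
    exact Finset.sum_congr rfl fun i _ => mul_comm _ _
  have hT : Matrix.toEuclideanLin Mx = 0 := by
    rw [← inner_map_self_eq_zero]
    intro x
    rw [EuclideanSpace.inner_eq_star_dotProduct, toEuclideanLin_apply]
    rw [WithLp.ofLp_toLp, dotProduct_comm, key _ x.ofLp, h x.ofLp, star_zero]
  exact Matrix.toEuclideanLin.injective (by rw [hT, map_zero])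

section Pinv
variable {k : ℕ} {W : Matrix (Fin k) (Fin k) ℂ} (hW : W.IsHermitian)

noncomputable def evU : Matrix (Fin k) (Fin k) ℂ :=
  (Matrix.IsHermitian.eigenvectorUnitary hW : Matrix (Fin k) (Fin k) ℂ)

lemma evU_mul_star : evU hW * star (evU hW) = 1 :=
  (Matrix.mem_unitaryGroup_iff).mp (Matrix.IsHermitian.eigenvectorUnitary hW).2

lemma star_mul_evU : star (evU hW) * evU hW = 1 :=
  (Matrix.mem_unitaryGroup_iff').mp (Matrix.IsHermitian.eigenvectorUnitary hW).2

noncomputable def cdiag (f : Fin k → ℂ) : Matrix (Fin k) (Fin k) ℂ :=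
  evU hW * diagonal f * star (evU hW)

noncomputable def evals : Fin k → ℂ := fun i => ((hW.eigenvalues i : ℝ) : ℂ)

lemma cdiag_mul (f g : Fin k → ℂ) : cdiag hW f * cdiag hW g = cdiag hW (f * g) := by
  unfold cdiag
  calc (evU hW * diagonal f * star (evU hW)) * (evU hW * diagonal g * star (evU hW))
      = evU hW * diagonal f * (star (evU hW) * evU hW) * diagonal g * star (evU hW) := by
        noncomm_ring
    _ = evU hW * diagonal (f * g) * star (evU hW) := by
        rw [star_mul_evU, Matrix.mul_one, Matrix.mul_assoc (evU hW), diagonal_mul_diagonal]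
        rfl

lemma cdiag_conjTranspose (f : Fin k → ℂ) : (cdiag hW f)ᴴ = cdiag hW (star f) := by
  unfold cdiag
  rw [conjTranspose_mul, conjTranspose_mul, diagonal_conjTranspose]
  simp only [Matrix.mul_assoc, star_eq_conjTranspose, conjTranspose_conjTranspose]

lemma W_eq_cdiag : W = cdiag hW (evals hW) := by
  have := hW.spectral_theorem
  simp only [Unitary.conjStarAlgAut_apply] at this
  unfold cdiag evU evals
  exact this

noncomputable def pinv : Matrix (Fin k) (Fin k) ℂ :=
  cdiag hW (fun i => (evals hW i)⁻¹)

lemma pinv_conjTranspose : (pinv hW)ᴴ = pinv hW := by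
  unfold pinv
  rw [cdiag_conjTranspose]
  have : (star fun i => (evals hW i)⁻¹) = fun i => (evals hW i)⁻¹ := by
    funext i
    unfold evals
    simp [← Complex.ofReal_inv]
  rw [this]

lemma pinv_WWpinv : W * W * pinv hW = W := by
  have h1 : W * W * pinv hW = cdiag hW (evals hW) * cdiag hW (evals hW)
      * cdiag hW (fun i => (evals hW i)⁻¹) := by
    unfold pinv
    rw [← W_eq_cdiag hW]
  rw [h1, cdiag_mul, cdiag_mul]
  have h2 : (evals hW * evals hW * fun i => (evals hW i)⁻¹) = evals hW := by
    funext i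
    simp only [Pi.mul_apply]
    by_cases h : evals hW i = 0
    · simp [h]
    · field_simp
  rw [h2, ← W_eq_cdiag hW]

lemma pinv_WpinvW : W * pinv hW * W = W := by
  have h1 : W * pinv hW * W = cdiag hW (evals hW) * cdiag hW (fun i => (evals hW i)⁻¹)
      * cdiag hW (evals hW) := by
    unfold pinv
    rw [← W_eq_cdiag hW]
  rw [h1, cdiag_mul, cdiag_mul]
  have h2 : ((evals hW * fun i => (evals hW i)⁻¹) * evals hW) = evals hW := by
    funext i
    simp only [Pi.mul_apply]
    by_cases h : evals hW i = 0
    · simp [h]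
    · field_simp
  rw [h2, ← W_eq_cdiag hW]

lemma pinv_pinvWpinv : pinv hW * W * pinv hW = pinv hW := by
  have h1 : pinv hW * W * pinv hW = cdiag hW (fun i => (evals hW i)⁻¹) * cdiag hW (evals hW)
      * cdiag hW (fun i => (evals hW i)⁻¹) := by
    unfold pinv
    rw [← W_eq_cdiag hW]
  rw [h1, cdiag_mul, cdiag_mul]
  have h2 : (((fun i => (evals hW i)⁻¹) * evals hW) * fun i => (evals hW i)⁻¹)
      = fun i => (evals hW i)⁻¹ := by
    funext i
    simp only [Pi.mul_apply]
    by_cases h : evals hW i = 0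
    · simp [h]
    · field_simp
  unfold pinv
  rw [h2]

end Pinv

section Perturb
variable {n : ℕ} (u : Fin n → ℂ)

lemma vecMulVec_conjTranspose : (vecMulVec u (star u))ᴴ = vecMulVec u (star u) := by
  ext i j
  simp [conjTranspose_apply, vecMulVec_apply, mul_comm]

lemma vecMulVec_sq :
    vecMulVec u (star u) * vecMulVec u (star u)
      = (((∑ i, ‖u i‖ ^ 2 : ℝ) : ℂ)) • vecMulVec u (star u) := by
  ext i j
  simp only [Matrix.mul_apply, vecMulVec_apply, Matrix.smul_apply, smul_eq_mul, Pi.star_apply]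
  calc ∑ k, u i * star (u k) * (u k * star (u j))
      = (∑ k, star (u k) * u k) * (u i * star (u j)) := by
        rw [Finset.sum_mul]
        exact Finset.sum_congr rfl fun k _ => by ring
    _ = ((∑ i, ‖u i‖ ^ 2 : ℝ) : ℂ) * (u i * star (u j)) := by
        rw [show (∑ k, star (u k) * u k) = star u ⬝ᵥ u from rfl, star_dot_self_eq]

lemma QQ_mul (α β : ℝ) :
    (1 + ((α : ℝ) : ℂ) • vecMulVec u (star u)) * (1 + ((β : ℝ) : ℂ) • vecMulVec u (star u))
      = 1 + (((α + β + α * β * (∑ i, ‖u i‖ ^ 2) : ℝ) : ℂ)) • vecMulVec u (star u) := by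
  rw [add_mul, mul_add, mul_add, Matrix.one_mul, Matrix.mul_one,
    smul_mul_smul_comm, vecMulVec_sq, smul_smul, one_mul]
  push_cast
  module

lemma dot_conjTranspose_mul {m : ℕ} (A : Matrix (Fin m) (Fin n) ℂ) :
    star u ⬝ᵥ ((Aᴴ * A) *ᵥ u) = ((∑ i, ‖(A *ᵥ u) i‖ ^ 2 : ℝ) : ℂ) := by
  rw [← mulVec_mulVec, dotProduct_mulVec, ← star_mulVec]
  exact star_dot_self_eq _

lemma frob_sq_perturb_right {m : ℕ} (A₀ : Matrix (Fin m) (Fin n) ℂ) (t : ℝ) :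
    frob (A₀ * (1 + ((t : ℝ) : ℂ) • vecMulVec u (star u))) ^ 2
      = frob A₀ ^ 2 + (2 * t + t ^ 2 * (∑ i, ‖u i‖ ^ 2)) * (∑ i, ‖(A₀ *ᵥ u) i‖ ^ 2) := by
  set P := vecMulVec u (star u) with hP
  set Q : Matrix (Fin n) (Fin n) ℂ := 1 + ((t : ℝ) : ℂ) • P with hQ
  have hQH : Qᴴ = Q := by
    rw [hQ, conjTranspose_add, conjTranspose_smul, hP, vecMulVec_conjTranspose]
    simp
  apply Complex.ofReal_injective
  rw [← trace_conjTranspose_mul]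
  have h1 : (A₀ * Q)ᴴ * (A₀ * Q) = Q * ((A₀ᴴ * A₀) * Q) := by
    rw [conjTranspose_mul, hQH]
    simp only [Matrix.mul_assoc]
  rw [h1, trace_mul_comm, Matrix.mul_assoc, hQ, hP, QQ_mul,
    Matrix.mul_add, Matrix.mul_one, trace_add, mul_smul_comm, trace_smul,
    trace_mul_vecMulVec, dot_conjTranspose_mul, trace_conjTranspose_mul]
  push_cast
  simp only [smul_eq_mul]
  ring

lemma frob_sq_perturb_left {k : ℕ} (B₀ : Matrix (Fin n) (Fin k) ℂ) (c : ℝ) :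
    frob ((1 - ((c : ℝ) : ℂ) • vecMulVec u (star u)) * B₀) ^ 2
      = frob B₀ ^ 2 - (2 * c - c ^ 2 * (∑ i, ‖u i‖ ^ 2)) * (∑ i, ‖(B₀ᴴ *ᵥ u) i‖ ^ 2) := by
  set P := vecMulVec u (star u) with hP
  set R : Matrix (Fin n) (Fin n) ℂ := 1 - ((c : ℝ) : ℂ) • P with hR
  have hRH : Rᴴ = R := by
    rw [hR, conjTranspose_sub, conjTranspose_smul, hP, vecMulVec_conjTranspose]
    simp
  have hR' : R = 1 + ((-c : ℝ) : ℂ) • P := by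
    push_cast
    rw [hR, neg_smul, sub_eq_add_neg]
  apply Complex.ofReal_injective
  rw [← trace_mul_conjTranspose]
  have h1 : (R * B₀) * (R * B₀)ᴴ = R * ((B₀ * B₀ᴴ) * R) := by
    rw [conjTranspose_mul, hRH]
    simp only [Matrix.mul_assoc]
  rw [h1, trace_mul_comm, Matrix.mul_assoc, hR', hP, QQ_mul,
    Matrix.mul_add, Matrix.mul_one, trace_add, mul_smul_comm, trace_smul,
    trace_mul_vecMulVec]
  have h2 : star u ⬝ᵥ ((B₀ * B₀ᴴ) *ᵥ u) = ((∑ i, ‖(B₀ᴴ *ᵥ u) i‖ ^ 2 : ℝ) : ℂ) := by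
    have := dot_conjTranspose_mul u B₀ᴴ
    rwa [conjTranspose_conjTranspose] at this
  rw [h2, trace_mul_conjTranspose]
  push_cast
  simp only [smul_eq_mul]
  ring

lemma perturb_prod {m k : ℕ} (A₀ : Matrix (Fin m) (Fin n) ℂ) (B₀ : Matrix (Fin n) (Fin k) ℂ)
    (t c : ℝ) (h : t - c - t * c * (∑ i, ‖u i‖ ^ 2) = 0) :
    (A₀ * (1 + ((t : ℝ) : ℂ) • vecMulVec u (star u)))
      * ((1 - ((c : ℝ) : ℂ) • vecMulVec u (star u)) * B₀) = A₀ * B₀ := by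
  have hR' : (1 : Matrix (Fin n) (Fin n) ℂ) - ((c : ℝ) : ℂ) • vecMulVec u (star u)
      = 1 + ((-c : ℝ) : ℂ) • vecMulVec u (star u) := by
    push_cast
    rw [neg_smul, sub_eq_add_neg]
  rw [Matrix.mul_assoc, ← Matrix.mul_assoc _ _ B₀, hR', QQ_mul]
  have h2 : (t + -c + t * -c * (∑ i, ‖u i‖ ^ 2)) = 0 := by linarith
  rw [h2]
  norm_num

end Perturb

lemma key_scalar {M N K : ℕ} (A₀ : Matrix (Fin M) (Fin N) ℂ) (B₀ : Matrix (Fin N) (Fin K) ℂ)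
    (hmin : ∀ (A' : Matrix (Fin M) (Fin N) ℂ) (B' : Matrix (Fin N) (Fin K) ℂ),
        A' * B' = A₀ * B₀ → frob A₀ * frob B₀ ≤ frob A' * frob B')
    (u : Fin N → ℂ) :
    (∑ i, ‖(A₀ *ᵥ u) i‖ ^ 2) * frob B₀ ^ 2 = frob A₀ ^ 2 * (∑ i, ‖(B₀ᴴ *ᵥ u) i‖ ^ 2) := by
  set a := frob A₀ with hA0
  set b := frob B₀ with hB0
  set s := ∑ i, ‖u i‖ ^ 2 with hs
  set x := ∑ i, ‖(A₀ *ᵥ u) i‖ ^ 2 with hx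
  set y := ∑ i, ‖(B₀ᴴ *ᵥ u) i‖ ^ 2 with hy
  have hs0 : 0 ≤ s := Finset.sum_nonneg fun i _ => sq_nonneg _
  set δ : ℝ := 1 / (s + 1) with hδ
  have hδ0 : 0 < δ := by rw [hδ]; exact one_div_pos.mpr (by linarith)
  set g : ℝ → ℝ := fun t =>
    (a ^ 2 + (2 * t + t ^ 2 * s) * x) *
      (b ^ 2 - (2 * (t / (1 + t * s)) - (t / (1 + t * s)) ^ 2 * s) * y) with hg
  have hg0 : g 0 = (a * b) ^ 2 := by
    rw [hg]
    norm_num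
    ring
  have hmain : ∀ t : ℝ, |t| < δ → g 0 ≤ g t := by
    intro t ht
    obtain ⟨ht1, ht2⟩ := abs_lt.mp ht
    have hts : 0 < 1 + t * s := by
      have h3 : (-δ) * s ≤ t * s := mul_le_mul_of_nonneg_right ht1.le hs0
      have h4 : δ * (s + 1) = 1 := by
        rw [hδ]; field_simp
      nlinarith
    set c : ℝ := t / (1 + t * s) with hc
    have hcc : t - c - t * c * s = 0 := by
      rw [hc]
      field_simp
      ring
    have hprod := perturb_prod u A₀ B₀ t c (by rw [← hs]; exact hcc)
    have h5 := hmin _ _ hprod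
    have hA := frob_sq_perturb_right u A₀ t
    have hB := frob_sq_perturb_left u B₀ c
    rw [← hs, ← hx, ← hA0] at hA
    rw [← hs, ← hy, ← hB0] at hB
    have h6 : (a * b) ^ 2
        ≤ (frob (A₀ * (1 + ((t : ℝ) : ℂ) • vecMulVec u (star u)))
            * frob ((1 - ((c : ℝ) : ℂ) • vecMulVec u (star u)) * B₀)) ^ 2 :=
      pow_le_pow_left₀ (mul_nonneg (frob_nonneg _) (frob_nonneg _)) h5 2
    rw [hg0, hg]
    dsimp only
    rw [← hc, ← hA, ← hB, ← mul_pow]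
    exact h6
  have hloc : IsLocalMin g 0 := by
    have : ∀ᶠ t in nhds (0 : ℝ), g 0 ≤ g t := by
      filter_upwards [Metric.ball_mem_nhds (0 : ℝ) hδ0] with t ht
      exact hmain t (by simpa [Real.dist_eq] using ht)
    exact this
  have hden : HasDerivAt (fun t : ℝ => 1 + t * s) s 0 := by
    simpa using ((hasDerivAt_id (0 : ℝ)).mul_const s).const_add 1
  have hcd : HasDerivAt (fun t : ℝ => t / (1 + t * s)) 1 0 := by
    have h := (hasDerivAt_id (0 : ℝ)).div hden (by norm_num)
    exact h.congr_deriv (by simp)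
  have hg1 : HasDerivAt (fun t : ℝ => a ^ 2 + (2 * t + t ^ 2 * s) * x) (2 * x) 0 := by
    have ha1 : HasDerivAt (fun t : ℝ => 2 * t) 2 0 := by
      simpa using (hasDerivAt_id (0 : ℝ)).const_mul 2
    have ha2 : HasDerivAt (fun t : ℝ => t ^ 2 * s) 0 0 := by
      simpa using (hasDerivAt_pow 2 (0 : ℝ)).mul_const s
    have := (ha1.add ha2).mul_const x
    simpa using this.const_add (a ^ 2)
  have hg2 : HasDerivAt
      (fun t : ℝ => b ^ 2 - (2 * (t / (1 + t * s)) - (t / (1 + t * s)) ^ 2 * s) * y)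
      (-(2 * y)) 0 := by
    have h1 : HasDerivAt (fun t : ℝ => 2 * (t / (1 + t * s))) 2 0 := by
      simpa using hcd.const_mul 2
    have h2 : HasDerivAt (fun t : ℝ => (t / (1 + t * s)) ^ 2 * s) 0 0 := by
      simpa using (hcd.pow 2).mul_const s
    have h3 := ((h1.sub h2).mul_const y).const_sub (b ^ 2)
    simpa using h3
  have hgd : HasDerivAt g (2 * x * b ^ 2 + a ^ 2 * (-(2 * y))) 0 := by
    have := hg1.mul hg2
    rw [hg]
    exact this.congr_deriv (by norm_num)
  have hd0 : 2 * x * b ^ 2 + a ^ 2 * (-(2 * y)) = 0 := by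
    rw [← hgd.deriv]
    exact hloc.deriv_eq_zero
  linarith

lemma cond_of_min {M N K : ℕ} (A₀ : Matrix (Fin M) (Fin N) ℂ) (B₀ : Matrix (Fin N) (Fin K) ℂ)
    (ha : A₀ ≠ 0) (hb : B₀ ≠ 0)
    (hmin : ∀ (A' : Matrix (Fin M) (Fin N) ℂ) (B' : Matrix (Fin N) (Fin K) ℂ),
        A' * B' = A₀ * B₀ → frob A₀ * frob B₀ ≤ frob A' * frob B') :
    ((frob A₀) ^ 2)⁻¹ • (A₀ᴴ * A₀) = ((frob B₀) ^ 2)⁻¹ • (B₀ * B₀ᴴ) := by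
  have ha' : 0 < frob A₀ := frob_pos ha
  have hb' : 0 < frob B₀ := frob_pos hb
  have key := key_scalar A₀ B₀ hmin
  have hzero : ((frob B₀ ^ 2 : ℝ) : ℂ) • (A₀ᴴ * A₀) - ((frob A₀ ^ 2 : ℝ) : ℂ) • (B₀ * B₀ᴴ)
      = 0 := by
    apply eq_zero_of_forall_dot
    intro u
    rw [Matrix.sub_mulVec, dotProduct_sub, smul_mulVec, smul_mulVec,
      dotProduct_smul, dotProduct_smul, dot_conjTranspose_mul]
    have h2 : star u ⬝ᵥ ((B₀ * B₀ᴴ) *ᵥ u) = ((∑ i, ‖(B₀ᴴ *ᵥ u) i‖ ^ 2 : ℝ) : ℂ) := by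
      have := dot_conjTranspose_mul u B₀ᴴ
      rwa [conjTranspose_conjTranspose] at this
    rw [h2]
    simp only [smul_eq_mul]
    rw [sub_eq_zero]
    have h3 : frob B₀ ^ 2 * (∑ i, ‖(A₀ *ᵥ u) i‖ ^ 2)
        = frob A₀ ^ 2 * (∑ i, ‖(B₀ᴴ *ᵥ u) i‖ ^ 2) := by linarith [key u]
    exact_mod_cast congrArg Complex.ofReal h3
  rw [sub_eq_zero] at hzero
  ext i j
  have hent := Matrix.ext_iff.mpr hzero i j
  simp only [Matrix.smul_apply, smul_eq_mul] at hent
  simp only [Matrix.smul_apply]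
  rw [Complex.real_smul, Complex.real_smul]
  have hA2 : ((frob A₀ : ℂ)) ^ 2 ≠ 0 := by
    norm_cast
    positivity
  have hB2 : ((frob B₀ : ℂ)) ^ 2 ≠ 0 := by
    norm_cast
    positivity
  push_cast at hent ⊢
  have hA1 : ((frob A₀ : ℂ)) ≠ 0 := by exact_mod_cast ha'.ne'
  have hB1 : ((frob B₀ : ℂ)) ≠ 0 := by exact_mod_cast hb'.ne'
  field_simp
  linear_combination hent

lemma real_smul_matrix {m n : ℕ} (r : ℝ) (P : Matrix (Fin m) (Fin n) ℂ) :
    r • P = ((r : ℂ)) • P := by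
  ext i j
  simp [Matrix.smul_apply, Complex.real_smul]

open scoped ComplexOrder in
lemma min_of_prop {M N K : ℕ} (A₀ : Matrix (Fin M) (Fin N) ℂ) (B₀ : Matrix (Fin N) (Fin K) ℂ)
    (ha : A₀ ≠ 0) (hb : B₀ ≠ 0)
    (hcond : ((frob A₀) ^ 2)⁻¹ • (A₀ᴴ * A₀) = ((frob B₀) ^ 2)⁻¹ • (B₀ * B₀ᴴ))
    (A' : Matrix (Fin M) (Fin N) ℂ) (B' : Matrix (Fin N) (Fin K) ℂ)
    (hp : A' * B' = A₀ * B₀) :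
    frob A₀ * frob B₀ ≤ frob A' * frob B' := by
  have ha' : 0 < frob A₀ := frob_pos ha
  have hb' : 0 < frob B₀ := frob_pos hb
  set a := frob A₀ with hA0
  set b := frob B₀ with hB0
  have hW : (B₀ * B₀ᴴ).IsHermitian := isHermitian_mul_conjTranspose_self B₀
  -- X = (a²/b²) • W
  have hX : A₀ᴴ * A₀ = (((a ^ 2 / b ^ 2 : ℝ) : ℂ)) • (B₀ * B₀ᴴ) := by
    have h1 : A₀ᴴ * A₀ = (a ^ 2 : ℝ) • (((a ^ 2)⁻¹ : ℝ) • (A₀ᴴ * A₀)) := by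
      rw [smul_smul]
      rw [mul_inv_cancel₀ (by positivity), one_smul]
    rw [h1, hcond, smul_smul, real_smul_matrix, div_eq_mul_inv]
  set G := pinv hW with hG
  set Mm := B₀ᴴ * G * B₀ with hMm
  have hMm2 : Mm * Mm = Mm := by
    calc Mm * Mm = B₀ᴴ * (G * (B₀ * B₀ᴴ) * G * B₀) := by
          rw [hMm]; simp only [Matrix.mul_assoc]
      _ = Mm := by rw [hG, pinv_pinvWpinv hW, hMm]; simp only [Matrix.mul_assoc, hG]
  have hMmH : Mmᴴ = Mm := by
    rw [hMm, conjTranspose_mul, conjTranspose_mul, conjTranspose_conjTranspose, hG,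
      pinv_conjTranspose hW]
    simp only [Matrix.mul_assoc]
  have h1M : (1 - Mm).PosSemidef := by
    have h' : (1 - Mm)ᴴ * (1 - Mm) = 1 - Mm := by
      rw [conjTranspose_sub, conjTranspose_one, hMmH, Matrix.sub_mul, Matrix.one_mul,
        Matrix.mul_sub, Matrix.mul_one, hMm2]
      abel
    rw [← h']
    exact posSemidef_conjTranspose_mul_self _
  set Z : Matrix (Fin M) (Fin K) ℂ := (((b / a : ℝ) : ℂ)) • (A₀ * G * B₀) with hZ
  have hZH : Zᴴ = (((b / a : ℝ) : ℂ)) • (B₀ᴴ * (G * A₀ᴴ)) := by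
    rw [hZ, conjTranspose_smul, conjTranspose_mul, conjTranspose_mul, hG,
      pinv_conjTranspose hW, Complex.star_def, Complex.conj_ofReal]
  have hZZ : Zᴴ * Z = Mm := by
    rw [hZH, hZ, Matrix.smul_mul, Matrix.mul_smul, smul_smul]
    have h2 : B₀ᴴ * (G * A₀ᴴ) * (A₀ * G * B₀) = B₀ᴴ * (G * ((A₀ᴴ * A₀) * (G * B₀))) := by
      simp only [Matrix.mul_assoc]
    rw [h2, hX, Matrix.smul_mul, Matrix.mul_smul, Matrix.mul_smul, smul_smul]
    have h3 : (((b / a : ℝ) : ℂ)) * (((b / a : ℝ) : ℂ)) * (((a ^ 2 / b ^ 2 : ℝ) : ℂ)) = 1 := by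
      push_cast
      field_simp
    rw [h3, one_smul]
    calc B₀ᴴ * (G * ((B₀ * B₀ᴴ) * (G * B₀)))
        = B₀ᴴ * ((G * (B₀ * B₀ᴴ) * G) * B₀) := by simp only [Matrix.mul_assoc]
      _ = Mm := by rw [hG, pinv_pinvWpinv hW, hMm]; simp only [Matrix.mul_assoc, hG]
  have htraceZ : trace (A₀ * B₀ * Zᴴ) = (((a * b : ℝ) : ℂ)) := by
    rw [hZH, Matrix.mul_smul, trace_smul]
    have h4 : A₀ * B₀ * (B₀ᴴ * (G * A₀ᴴ)) = A₀ * (B₀ * (B₀ᴴ * (G * A₀ᴴ))) := by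
      simp only [Matrix.mul_assoc]
    rw [h4, trace_mul_comm]
    have h5 : B₀ * (B₀ᴴ * (G * A₀ᴴ)) * A₀ = B₀ * (B₀ᴴ * (G * (A₀ᴴ * A₀))) := by
      simp only [Matrix.mul_assoc]
    rw [h5, hX, Matrix.mul_smul, Matrix.mul_smul, Matrix.mul_smul, trace_smul]
    have h6 : B₀ * (B₀ᴴ * (G * (B₀ * B₀ᴴ))) = (B₀ * B₀ᴴ) * G * (B₀ * B₀ᴴ) := by
      simp only [Matrix.mul_assoc]
    rw [h6, hG, pinv_WpinvW hW, trace_mul_conjTranspose, ← hB0]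
    simp only [smul_eq_mul]
    push_cast
    field_simp
  -- main chain
  have step1 : (trace (A' * (B' * Zᴴ))).re = a * b := by
    rw [← Matrix.mul_assoc, hp, Matrix.mul_assoc, ← Matrix.mul_assoc, htraceZ]
    exact Complex.ofReal_re _
  have step2 := re_trace_mul_le A' (B' * Zᴴ)
  have step3 : frob (B' * Zᴴ) ≤ frob B' := by
    have e1 : ((frob (B' * Zᴴ) ^ 2 : ℝ) : ℂ) = trace (B'ᴴ * B' * Mm) := by
      rw [← trace_conjTranspose_mul, conjTranspose_mul, conjTranspose_conjTranspose]
      have : Z * B'ᴴ * (B' * Zᴴ) = Z * (B'ᴴ * (B' * Zᴴ)) := by simp only [Matrix.mul_assoc]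
      rw [this, trace_mul_comm, ← hZZ]
      have : B'ᴴ * (B' * Zᴴ) * Z = B'ᴴ * B' * (Zᴴ * Z) := by simp only [Matrix.mul_assoc]
      rw [this]
    have e2 : 0 ≤ (trace (B'ᴴ * B' * (1 - Mm))).re :=
      trace_mul_re_nonneg (posSemidef_conjTranspose_mul_self B') h1M
    rw [Matrix.mul_sub, Matrix.mul_one, trace_sub, Complex.sub_re,
      trace_conjTranspose_mul] at e2
    have e3 : (trace (B'ᴴ * B' * Mm)).re = frob (B' * Zᴴ) ^ 2 := by
      rw [← e1]
      exact Complex.ofReal_re _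
    rw [e3] at e2
    have e4 : ((frob B' ^ 2 : ℝ) : ℂ).re = frob B' ^ 2 := Complex.ofReal_re _
    rw [e4] at e2
    nlinarith [frob_nonneg (B' * Zᴴ), frob_nonneg B']
  calc a * b = (trace (A' * (B' * Zᴴ))).re := step1.symm
    _ ≤ frob A' * frob (B' * Zᴴ) := step2
    _ ≤ frob A' * frob B' := mul_le_mul_of_nonneg_left step3 (frob_nonneg A')

/-- `(A₀,B₀)` with `A₀B₀ = AB ≠ 0` is a minimal singularity form
(i.e. minimizes `‖A'‖·‖B'‖` over `{(A',B') : A'B' = AB}`) if and only if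
`A₀ᴴA₀/‖A₀‖² = B₀B₀ᴴ/‖B₀‖²`. -/
theorem stmt3 (M N K : ℕ)
    (A A₀ : Matrix (Fin M) (Fin N) ℂ) (B B₀ : Matrix (Fin N) (Fin K) ℂ)
    (hAB : A * B ≠ 0) (h0 : A₀ * B₀ = A * B) :
    (∀ (A' : Matrix (Fin M) (Fin N) ℂ) (B' : Matrix (Fin N) (Fin K) ℂ),
        A' * B' = A * B → frob A₀ * frob B₀ ≤ frob A' * frob B') ↔
      ((frob A₀) ^ 2)⁻¹ • (A₀ᴴ * A₀) = ((frob B₀) ^ 2)⁻¹ • (B₀ * B₀ᴴ) := by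
  have ha : A₀ ≠ 0 := by
    rintro rfl
    rw [Matrix.zero_mul] at h0
    exact hAB h0.symm
  have hb : B₀ ≠ 0 := by
    rintro rfl
    rw [Matrix.mul_zero] at h0
    exact hAB h0.symm
  constructor
  · intro hmin
    exact cond_of_min A₀ B₀ ha hb fun A' B' h => hmin A' B' (h.trans h0)
  · intro hcond A' B' hp
    exact min_of_prop A₀ B₀ ha hb hcond A' B' (hp.trans h0.symm)
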